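/- Let d ≥ 1, R > 0, L > 0, let f : B_d(0,R) → ℝ be L-Lipschitz, and let f* = min_{x ∈ B_d(0,R)} f(x). Let ε ∈ (0, 4LR], δ ∈ (0,1), and λ ≥ (2d·ln(4LR/ε) + 2·ln(1/δ))/ε. Then the Gibbs distribution D_f^λ on B_d(0,R) satisfies D_f^λ({x ∈ B_d(0,R) : f(x) ≥ f* + ε}) ≤ δ; in particular, a sample from D_f^λ is an ε-optimizer of f with probability at least 1 − δ. -/

import Mathlib

open Real MeasureTheory Metric

set_option maxHeartbeats 1000000 in
/-- Sampling implies optimization, Lipschitz case: if `f` is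
`L`-Lipschitz on `B(0,R)` with minimum `f* = f xstar`, `ε ∈ (0, 4LR]` and
`λ ≥ (2d·ln(4LR/ε) + 2·ln(1/δ))/ε`, then the Gibbs distribution of `f` on `B(0,R)`
puts mass at most `δ` on the set of points that are not `ε`-optimizers. -/
theorem sampling_implies_optimization_lipschitz (d : ℕ) (hd : 1 ≤ d)
    (R : ℝ) (hR : 0 < R) (L : ℝ) (hL : 0 < L)
    (f : EuclideanSpace ℝ (Fin d) → ℝ)
    (hf : ∀ x ∈ Metric.closedBall (0 : EuclideanSpace ℝ (Fin d)) R,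
      ∀ x' ∈ Metric.closedBall (0 : EuclideanSpace ℝ (Fin d)) R,
        |f x - f x'| ≤ L * ‖x - x'‖)
    (xstar : EuclideanSpace ℝ (Fin d))
    (hxstar : xstar ∈ Metric.closedBall (0 : EuclideanSpace ℝ (Fin d)) R)
    (hmin : ∀ x ∈ Metric.closedBall (0 : EuclideanSpace ℝ (Fin d)) R, f xstar ≤ f x)
    (ε : ℝ) (hε : 0 < ε) (hε' : ε ≤ 4 * L * R)
    (δ : ℝ) (hδ : 0 < δ) (hδ' : δ < 1)
    (lam : ℝ)
    (hlam : (2 * (d : ℝ) * Real.log (4 * L * R / ε) + 2 * Real.log (1 / δ)) / ε ≤ lam) :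
    (∫ x in {x ∈ Metric.closedBall (0 : EuclideanSpace ℝ (Fin d)) R |
        f xstar + ε ≤ f x}, Real.exp (-(lam * f x))) /
      (∫ x in Metric.closedBall (0 : EuclideanSpace ℝ (Fin d)) R,
        Real.exp (-(lam * f x))) ≤ δ := by
  set B := Metric.closedBall (0 : EuclideanSpace ℝ (Fin d)) R with hBdef
  have h4LR : (0:ℝ) < 4 * L * R := by positivity
  set t : ℝ := ε / (4 * L * R) with htdef
  have ht0 : 0 < t := div_pos hε h4LR
  have ht1 : t ≤ 1 := (div_le_one h4LR).mpr hε'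
  -- lam nonneg
  have hlog1 : 0 ≤ Real.log (4 * L * R / ε) :=
    Real.log_nonneg ((one_le_div hε).mpr hε')
  have hlog2 : 0 ≤ Real.log (1 / δ) :=
    Real.log_nonneg ((le_div_iff₀ hδ).mpr (by linarith))
  have hlam0 : 0 ≤ lam := le_trans (by positivity) hlam
  -- continuity of f on B
  have hfc : ContinuousOn f B := by
    refine (LipschitzOnWith.of_dist_le_mul (K := L.toNNReal) ?_).continuousOn
    intro x hx y hy
    rw [Real.dist_eq, dist_eq_norm, Real.coe_toNNReal _ hL.le]
    exact hf x hx y hy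
  set g : EuclideanSpace ℝ (Fin d) → ℝ := fun x => Real.exp (-(lam * f x)) with hgdef
  have hgc : ContinuousOn g B :=
    Real.continuous_exp.comp_continuousOn (continuousOn_const.mul hfc).neg
  have hgint : IntegrableOn g B := hgc.integrableOn_compact (isCompact_closedBall _ _)
  have hg0 : ∀ x, 0 ≤ g x := fun x => (Real.exp_pos _).le
  -- the bad set
  set S : Set (EuclideanSpace ℝ (Fin d)) := {x ∈ B | f xstar + ε ≤ f x} with hSdef
  have hSB : S ⊆ B := fun x hx => hx.1
  have hScl : IsClosed S := by
    have : S = B ∩ f ⁻¹' Set.Ici (f xstar + ε) := by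
      ext x; simp [hSdef, Set.mem_sep_iff]
    rw [this]
    exact hfc.preimage_isClosed_of_isClosed Metric.isClosed_closedBall isClosed_Ici
  have hSmeas : MeasurableSet S := hScl.measurableSet
  -- small ball T
  set c : EuclideanSpace ℝ (Fin d) := (1 - t) • xstar with hcdef
  set T : Set (EuclideanSpace ℝ (Fin d)) := Metric.closedBall c (t * R) with hTdef
  have hxstarR : ‖xstar‖ ≤ R := mem_closedBall_zero_iff.mp hxstar
  have hTB : T ⊆ B := by
    intro x hx
    rw [hTdef, Metric.mem_closedBall, dist_eq_norm] at hx
    rw [hBdef, Metric.mem_closedBall, dist_zero_right]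
    calc ‖x‖ ≤ ‖x - c‖ + ‖c‖ := by simpa using norm_add_le (x - c) c
      _ ≤ t * R + (1 - t) * ‖xstar‖ := by
          gcongr
          rw [hcdef, norm_smul, Real.norm_eq_abs, abs_of_nonneg (by linarith)]
      _ ≤ t * R + (1 - t) * R := by nlinarith
      _ = R := by ring
  have hfT : ∀ x ∈ T, f x ≤ f xstar + ε / 2 := by
    intro x hx
    have hxB : x ∈ B := hTB hx
    have h1 : ‖x - xstar‖ ≤ 2 * t * R := by
      have h2 : ‖x - c‖ ≤ t * R := by
        rw [hTdef, Metric.mem_closedBall, dist_eq_norm] at hx; exact hx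
      have h3 : ‖c - xstar‖ ≤ t * R := by
        have : c - xstar = (-t) • xstar := by
          rw [hcdef, sub_smul, one_smul]; module
        rw [this, norm_smul, Real.norm_eq_abs, abs_neg, abs_of_nonneg ht0.le]
        nlinarith
      calc ‖x - xstar‖ ≤ ‖x - c‖ + ‖c - xstar‖ := norm_sub_le_norm_sub_add_norm_sub _ _ _
        _ ≤ 2 * t * R := by linarith
    have h4 : |f x - f xstar| ≤ L * ‖x - xstar‖ := hf x hxB xstar hxstar
    have h5 : L * ‖x - xstar‖ ≤ L * (2 * t * R) := by nlinarith
    have ht : L * (2 * t * R) = ε / 2 := by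
      rw [htdef]; field_simp; ring
    have := (abs_le.mp h4).1
    linarith [abs_le.mp h4 |>.2]
  -- volumes
  have hrk : Module.finrank ℝ (EuclideanSpace ℝ (Fin d)) = d := finrank_euclideanSpace_fin
  have hvB : volume B = ENNReal.ofReal (R ^ d) * volume (Metric.ball (0 : EuclideanSpace ℝ (Fin d)) 1) := by
    rw [hBdef, Measure.addHaar_closedBall _ _ hR.le, hrk]
  have hvT : volume T = ENNReal.ofReal ((t * R) ^ d) * volume (Metric.ball (0 : EuclideanSpace ℝ (Fin d)) 1) := by
    rw [hTdef, Measure.addHaar_closedBall _ _ (by positivity), hrk]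
  have hUfin : volume (Metric.ball (0 : EuclideanSpace ℝ (Fin d)) 1) ≠ ⊤ :=
    measure_ball_lt_top.ne
  have hUpos : 0 < (volume (Metric.ball (0 : EuclideanSpace ℝ (Fin d)) 1)).toReal := by
    refine ENNReal.toReal_pos ?_ hUfin
    exact (measure_ball_pos _ _ one_pos).ne'
  set U : ℝ := (volume (Metric.ball (0 : EuclideanSpace ℝ (Fin d)) 1)).toReal with hUdef
  have hvBr : (volume B).toReal = R ^ d * U := by
    rw [hvB, ENNReal.toReal_mul, ENNReal.toReal_ofReal (by positivity)]
  have hvTr : (volume T).toReal = (t * R) ^ d * U := by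
    rw [hvT, ENNReal.toReal_mul, ENNReal.toReal_ofReal (by positivity)]
  -- constants
  set C1 : ℝ := Real.exp (-(lam * (f xstar + ε))) with hC1
  set C2 : ℝ := Real.exp (-(lam * (f xstar + ε / 2))) with hC2
  -- numerator bound
  have hnum : (∫ x in S, g x) ≤ C1 * (R ^ d * U) := by
    have h1 : (∫ x in S, g x) ≤ ∫ x in S, C1 := by
      refine setIntegral_mono_on (hgint.mono_set hSB) ((integrableOn_const_iff (C := C1)).mpr ?_) hSmeas ?_
      · right
        exact lt_of_le_of_lt (measure_mono hSB) (by rw [hBdef]; exact measure_closedBall_lt_top)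
      · intro x hx
        exact Real.exp_le_exp.mpr (by nlinarith [mul_le_mul_of_nonneg_left hx.2 hlam0])
    have h2 : (∫ x in S, (C1:ℝ)) = C1 * (volume S).toReal := by
      rw [setIntegral_const, smul_eq_mul, mul_comm, measureReal_def]
    have h3 : (volume S).toReal ≤ (volume B).toReal := by
      refine ENNReal.toReal_mono ?_ (measure_mono hSB)
      rw [hBdef]; exact measure_closedBall_lt_top.ne
    calc (∫ x in S, g x) ≤ C1 * (volume S).toReal := by rw [← h2]; exact h1
      _ ≤ C1 * (volume B).toReal := by
          exact mul_le_mul_of_nonneg_left h3 (Real.exp_pos _).le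
      _ = C1 * (R ^ d * U) := by rw [hvBr]
  -- denominator bound
  have hden : C2 * ((t * R) ^ d * U) ≤ ∫ x in B, g x := by
    have h1 : (∫ x in T, g x) ≤ ∫ x in B, g x :=
      setIntegral_mono_set hgint (ae_of_all _ hg0) (HasSubset.Subset.eventuallyLE hTB)
    have h2 : (∫ x in T, (C2:ℝ)) ≤ ∫ x in T, g x := by
      refine setIntegral_mono_on ((integrableOn_const_iff (C := C2)).mpr ?_) (hgint.mono_set hTB)
        measurableSet_closedBall ?_
      · right; rw [hTdef]; exact measure_closedBall_lt_top
      · intro x hx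
        exact Real.exp_le_exp.mpr (by nlinarith [mul_le_mul_of_nonneg_left (hfT x hx) hlam0])
    have h3 : (∫ x in T, (C2:ℝ)) = C2 * ((t * R) ^ d * U) := by
      rw [setIntegral_const, smul_eq_mul, mul_comm, measureReal_def, hvTr]
    linarith
  have hdenpos : 0 < ∫ x in B, g x :=
    lt_of_lt_of_le (mul_pos (Real.exp_pos _)
      (mul_pos (pow_pos (mul_pos ht0 hR) d) hUpos)) hden
  -- key exponential inequality
  have hkey : Real.exp (-(lam * ε / 2)) ≤ δ * t ^ d := by
    rw [← Real.exp_log (show (0:ℝ) < δ * t ^ d by positivity)]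
    apply Real.exp_le_exp.mpr
    rw [Real.log_mul hδ.ne' (by positivity), Real.log_pow]
    have h1 : Real.log (4 * L * R / ε) = - Real.log t := by
      rw [← Real.log_inv]; congr 1
      rw [htdef]; field_simp
    have h2 : Real.log (1 / δ) = - Real.log δ := by rw [one_div, Real.log_inv]
    rw [h1, h2] at hlam
    have := (div_le_iff₀ hε).mp hlam
    nlinarith
  -- final
  rw [div_le_iff₀ hdenpos]
  have hC1C2 : C1 = C2 * Real.exp (-(lam * ε / 2)) := by
    rw [hC1, hC2, ← Real.exp_add]; ring_nf
  calc (∫ x in S, g x) ≤ C1 * (R ^ d * U) := hnum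
    _ ≤ δ * (C2 * ((t * R) ^ d * U)) := by
        rw [hC1C2, mul_pow]
        have hC2pos : (0:ℝ) < C2 := Real.exp_pos _
        have hRd : (0:ℝ) < R ^ d := by positivity
        nlinarith [mul_le_mul_of_nonneg_right hkey (by positivity : (0:ℝ) ≤ R ^ d * U),
          mul_pos hRd hUpos]
    _ ≤ δ * ∫ x in B, g x := mul_le_mul_of_nonneg_left hden hδ.le
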